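/- Let S = ⟨n₁, …, n_k⟩ be a numerical monoid with minimal generating set {n₁, …, n_k} and let x ∈ S be nonzero. Then ω(x) = m if and only if m is the maximum length of a sum x₁ + ⋯ + x_t of irreducible elements of S such that x divides x₁ + ⋯ + x_t in S but x does not divide x₁ + ⋯ + x_{j−1} + x_{j+1} + ⋯ + x_t in S for any 1 ≤ j ≤ t. -/

import Mathlib

/-- The numerical monoid generated by `n 0, …, n (k-1)`. -/
def NumMon {k : ℕ} (n : Fin k → ℕ) : Set ℕ := {x | ∃ c : Fin k → ℕ, ∑ i, c i * n i = x}

/-- The generating set is minimal: no generator lies in the submonoid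
generated by the remaining generators. -/
def MinimalGens {k : ℕ} (n : Fin k → ℕ) : Prop :=
  ∀ i, ¬ ∃ c : Fin k → ℕ, c i = 0 ∧ ∑ j, c j * n j = n i

/-- `x` is irreducible in the set `S` (an additive submonoid of ℕ). -/
def IrreducibleIn (S : Set ℕ) (x : ℕ) : Prop :=
  x ∈ S ∧ x ≠ 0 ∧ ∀ y ∈ S, ∀ z ∈ S, x = y + z → y = 0 ∨ z = 0

/-- `x` divides `y` in the numerical monoid generated by `n`. -/
def GDvd {k : ℕ} (n : Fin k → ℕ) (x y : ℕ) : Prop := ∃ z ∈ NumMon n, y = x + z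

/-- `m` is an ω-bound for `x`: whenever `x` divides a sum of elements of the monoid,
it divides a subsum of at most `m` of them. -/
def GOmegaBound {k : ℕ} (n : Fin k → ℕ) (x m : ℕ) : Prop :=
  ∀ (t : ℕ) (f : Fin t → ℕ), (∀ i, f i ∈ NumMon n) → GDvd n x (∑ i, f i) →
    ∃ T : Finset (Fin t), T.card ≤ m ∧ GDvd n x (∑ i ∈ T, f i)

/-- The ω-primality of `x` in the numerical monoid generated by `n`. -/
noncomputable def GOmega {k : ℕ} (n : Fin k → ℕ) (x : ℕ) : ℕ := sInf {m | GOmegaBound n x m}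

/-- `t` is the length of a bullet for `x`: a sum of `t` irreducibles that `x` divides,
but such that `x` divides no sum obtained by omitting one summand. -/
def IsBulletLength {k : ℕ} (n : Fin k → ℕ) (x t : ℕ) : Prop :=
  ∃ f : Fin t → ℕ, (∀ i, IrreducibleIn (NumMon n) (f i)) ∧
    GDvd n x (∑ i, f i) ∧
    ∀ j : Fin t, ¬ GDvd n x (∑ i ∈ Finset.univ.erase j, f i)

namespace BulletAux

variable {k : ℕ}

lemma zero_mem (n : Fin k → ℕ) : (0:ℕ) ∈ NumMon n := ⟨fun _ => 0, by simp⟩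

lemma add_mem {n : Fin k → ℕ} {a b : ℕ} (ha : a ∈ NumMon n) (hb : b ∈ NumMon n) :
    a + b ∈ NumMon n := by
  obtain ⟨c, hc⟩ := ha; obtain ⟨c', hc'⟩ := hb
  exact ⟨fun i => c i + c' i, by simp [add_mul, Finset.sum_add_distrib, hc, hc']⟩

lemma smul_mem (n : Fin k → ℕ) (m : ℕ) {a : ℕ} (ha : a ∈ NumMon n) : m * a ∈ NumMon n := by
  obtain ⟨c, hc⟩ := ha
  exact ⟨fun i => m * c i, by rw [← hc, Finset.mul_sum]; simp [mul_assoc]⟩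

lemma sum_mem {n : Fin k → ℕ} {ι : Type*} (T : Finset ι) (f : ι → ℕ)
    (hf : ∀ i ∈ T, f i ∈ NumMon n) : (∑ i ∈ T, f i) ∈ NumMon n :=
  Finset.sum_induction f (· ∈ NumMon n) (fun _ _ ha hb => add_mem ha hb) (zero_mem n) hf

lemma gen_mem (n : Fin k → ℕ) (i : Fin k) : n i ∈ NumMon n :=
  ⟨fun j => if j = i then 1 else 0, by simp⟩

end BulletAux

namespace BulletAux

noncomputable def dgcd (n : Fin k → ℕ) : ℕ := (List.ofFn n).foldr Nat.gcd 0

lemma list_gcd_dvd : ∀ (l : List ℕ), ∀ a ∈ l, l.foldr Nat.gcd 0 ∣ a := by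
  intro l
  induction l with
  | nil => intro a ha; simp at ha
  | cons b t ih =>
    intro a ha
    rcases List.mem_cons.1 ha with rfl | ha
    · exact Nat.gcd_dvd_left _ _
    · exact (Nat.gcd_dvd_right b _).trans (ih a ha)

lemma dgcd_dvd {n : Fin k → ℕ} {y : ℕ} (hy : y ∈ NumMon n) : dgcd n ∣ y := by
  obtain ⟨c, rfl⟩ := hy
  refine Finset.dvd_sum fun i _ => Dvd.dvd.mul_left ?_ (c i)
  exact list_gcd_dvd _ _ (List.mem_ofFn.2 ⟨i, rfl⟩)

lemma exists_PQ {n : Fin k → ℕ} :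
    ∀ l : List ℕ, (∀ a ∈ l, a ∈ NumMon n) →
      ∃ P ∈ NumMon n, ∃ Q ∈ NumMon n, P = Q + l.foldr Nat.gcd 0 := by
  intro l
  induction l with
  | nil => intro _; exact ⟨0, zero_mem n, 0, zero_mem n, rfl⟩
  | cons a t ih =>
    intro hmem
    obtain ⟨P, hP, Q, hQ, hPQ⟩ := ih (fun b hb => hmem b (List.mem_cons_of_mem a hb))
    have ha : a ∈ NumMon n := hmem a (List.mem_cons_self)
    set g : ℕ := t.foldr Nat.gcd 0 with hg
    show ∃ P' ∈ NumMon n, ∃ Q' ∈ NumMon n, P' = Q' + Nat.gcd a g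
    have hbez : (Nat.gcd a g : ℤ) = a * Nat.gcdA a g + g * Nat.gcdB a g := Nat.gcd_eq_gcd_ab a g
    set u : ℤ := Nat.gcdB a g
    set v : ℤ := Nat.gcdA a g
    set M : ℤ := u.natAbs + 1
    set u' : ℤ := u + a * M
    set v' : ℤ := v - g * M
    rcases Nat.eq_zero_or_pos a with rfl | hapos
    · exact ⟨P, hP, Q, hQ, by rwa [Nat.gcd_zero_left]⟩
    have hu' : 0 ≤ u' := by
      have h1 : (1:ℤ) ≤ a := by exact_mod_cast hapos
      have h2 : (u.natAbs : ℤ) + 1 ≤ a * M := by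
        calc (u.natAbs : ℤ) + 1 = 1 * M := by simp [M]
        _ ≤ a * M := by
            apply mul_le_mul_of_nonneg_right h1
            positivity
      have h3 : -(u.natAbs : ℤ) ≤ u := by
        rw [← Int.abs_eq_natAbs]; exact neg_abs_le u
      simp only [u']
      omega
    have key : (Nat.gcd a g : ℤ) = a * v' + g * u' := by
      rw [hbez]; simp only [u', v']; ring
    rcases le_or_gt 0 v' with hv' | hv'
    · -- gcd = V*a + U*g  with V, U ∈ ℕ
      set V : ℕ := v'.toNat
      set U : ℕ := u'.toNat
      have hkeyN : Nat.gcd a g = V * a + U * g := by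
        have : (Nat.gcd a g : ℤ) = (V : ℤ) * a + (U : ℤ) * g := by
          rw [Int.toNat_of_nonneg hv', Int.toNat_of_nonneg hu']
          rw [key]; ring
        exact_mod_cast this
      refine ⟨V * a + U * P, add_mem (smul_mem n V ha) (smul_mem n U hP),
        U * Q, smul_mem n U hQ, ?_⟩
      rw [hPQ, mul_add, hkeyN]; ring
    · -- gcd + W*a = U*g
      set W : ℕ := (-v').toNat
      set U : ℕ := u'.toNat
      have hkeyN : Nat.gcd a g + W * a = U * g := by
        have : (Nat.gcd a g : ℤ) + (W : ℤ) * a = (U : ℤ) * g := by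
          rw [Int.toNat_of_nonneg (by omega : (0:ℤ) ≤ -v'), Int.toNat_of_nonneg hu']
          rw [key]; ring
        exact_mod_cast this
      refine ⟨U * P, smul_mem n U hP, W * a + U * Q, add_mem (smul_mem n W ha) (smul_mem n U hQ), ?_⟩
      rw [hPQ, mul_add, ← hkeyN]; ring

lemma frob (n : Fin k → ℕ) : ∃ N : ℕ, ∀ y : ℕ, dgcd n ∣ y → N ≤ y → y ∈ NumMon n := by
  obtain ⟨P, hP, Q, hQ, hPQ⟩ :=
    exists_PQ (n := n) (List.ofFn n) (by
      intro a ha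
      obtain ⟨i, rfl⟩ := List.mem_ofFn.1 ha
      exact gen_mem n i)
  have hPQ : P = Q + dgcd n := hPQ
  set d : ℕ := dgcd n with hd
  rcases Nat.eq_zero_or_pos d with hd0 | hdpos
  · exact ⟨0, fun y hdvd _ => by
      rw [hd0] at hdvd
      rw [Nat.eq_zero_of_zero_dvd hdvd]
      exact zero_mem n⟩
  have hdQ : d ∣ Q := dgcd_dvd hQ
  obtain ⟨q, hq⟩ := hdQ
  rcases Nat.eq_zero_or_pos q with rfl | hqpos
  · -- Q = 0, so P = d ∈ S
    have hQ0 : Q = 0 := by omega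
    have hPd : P = d := by omega
    refine ⟨0, fun y hdvd _ => ?_⟩
    obtain ⟨m, rfl⟩ := hdvd
    rw [mul_comm, ← hPd]
    exact smul_mem n m hP
  · refine ⟨Q * Q, fun y hdvd hN => ?_⟩
    obtain ⟨m, rfl⟩ := hdvd
    rw [mul_comm d m] at hN ⊢
    -- now y = m * d, m * d ≥ Q * Q
    have hQq : Q = q * d := by rw [hq, mul_comm]
    have hmqq : q * q ≤ m := by
      have hdd : d ≤ d * d := Nat.le_mul_of_pos_left d hdpos
      have h1 : q * q * d ≤ m * d := by
        calc q * q * d ≤ q * q * (d * d) := Nat.mul_le_mul_left _ hdd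
        _ = Q * Q := by rw [hQq]; ring
        _ ≤ m * d := hN
      exact Nat.le_of_mul_le_mul_right h1 hdpos
    set c : ℕ := m / q
    set b : ℕ := m % q
    have hbq : b < q := Nat.mod_lt m hqpos
    have hcq : q ≤ c := (Nat.le_div_iff_mul_le hqpos).2 hmqq
    have hbc : b ≤ c := by omega
    have hcb : c * q + b = m := by rw [mul_comm]; exact Nat.div_add_mod m q
    have heq : (c - b) * Q + b * P = m * d := by
      rw [hPQ, hQq]
      have expand : (c - b) * (q * d) + b * (q * d + d)
          = ((c - b) + b) * (q * d) + b * d := by ring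
      rw [expand, Nat.sub_add_cancel hbc]
      calc c * (q * d) + b * d = (c * q + b) * d := by ring
      _ = m * d := by rw [hcb]
    rw [← heq]
    exact add_mem (smul_mem n _ hQ) (smul_mem n _ hP)

end BulletAux

namespace BulletAux

lemma gen_irred {n : Fin k → ℕ} (hpos : ∀ i, 0 < n i) (hmin : MinimalGens n) (i : Fin k) :
    IrreducibleIn (NumMon n) (n i) := by
  refine ⟨gen_mem n i, (hpos i).ne', ?_⟩
  rintro y ⟨c, rfl⟩ z ⟨c', rfl⟩ hyz
  set e : Fin k → ℕ := fun j => c j + c' j with he_def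
  have he : ∑ j, e j * n j = n i := by
    simp only [e, add_mul, Finset.sum_add_distrib]
    omega
  by_cases hei : e i = 0
  · exact absurd ⟨e, hei, he⟩ (hmin i)
  · have hsplit : e i * n i + ∑ j ∈ Finset.univ.erase i, e j * n j = n i := by
      have h0 := Finset.add_sum_erase Finset.univ (fun j => e j * n j) (Finset.mem_univ i)
      beta_reduce at h0
      rw [he] at h0
      exact h0
    have hle : n i ≤ e i * n i := Nat.le_mul_of_pos_left _ (Nat.pos_of_ne_zero hei)
    have hA : ∑ j ∈ Finset.univ.erase i, e j * n j = 0 := by omega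
    have hei1 : e i = 1 := by
      have h1 : e i * n i = 1 * n i := by omega
      exact Nat.eq_of_mul_eq_mul_right (hpos i) h1
    have hz : ∀ j, j ≠ i → e j = 0 := by
      intro j hj
      have := (Finset.sum_eq_zero_iff.1 hA) j (Finset.mem_erase.2 ⟨hj, Finset.mem_univ j⟩)
      have := hpos j
      rcases Nat.mul_eq_zero.1 ‹e j * n j = 0› with h | h
      · exact h
      · omega
    by_cases hci : c i = 0
    · left
      apply Finset.sum_eq_zero
      intro j _
      by_cases hji : j = i
      · subst hji; rw [hci]; ring
      · have : e j = 0 := hz j hji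
        have : c j = 0 := by simp only [e] at this; omega
        rw [this]; ring
    · right
      apply Finset.sum_eq_zero
      intro j _
      by_cases hji : j = i
      · subst hji
        have : c' j = 0 := by
          have := hei1; simp only [e] at this; omega
        rw [this]; ring
      · have : e j = 0 := hz j hji
        have : c' j = 0 := by simp only [e] at this; omega
        rw [this]; ring

lemma decomp {n : Fin k → ℕ} (hpos : ∀ i, 0 < n i) (hmin : MinimalGens n) {y : ℕ}
    (hy : y ∈ NumMon n) :
    ∃ L : List ℕ, (∀ a ∈ L, IrreducibleIn (NumMon n) a) ∧ L.sum = y := by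
  obtain ⟨c, rfl⟩ := hy
  refine ⟨(List.ofFn fun i => List.replicate (c i) (n i)).flatten, ?_, ?_⟩
  · intro a ha
    obtain ⟨l, hl, hal⟩ := List.mem_flatten.1 ha
    obtain ⟨i, hi⟩ := List.mem_ofFn.1 hl
    rw [← hi] at hal
    rw [List.eq_of_mem_replicate hal]
    exact gen_irred hpos hmin i
  · rw [List.sum_flatten, List.map_ofFn, List.sum_ofFn]
    apply Finset.sum_congr rfl
    intro i _
    simp [List.sum_replicate, mul_comm]

lemma gdvd_refl (n : Fin k → ℕ) (x : ℕ) : GDvd n x x := ⟨0, zero_mem n, by omega⟩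

lemma gdvd_add {n : Fin k → ℕ} {x s z : ℕ} (h : GDvd n x s) (hz : z ∈ NumMon n) :
    GDvd n x (s + z) := by
  obtain ⟨w, hw, rfl⟩ := h
  exact ⟨w + z, add_mem hw hz, by omega⟩

lemma gdvd_mono {n : Fin k → ℕ} {x : ℕ} {ι : Type*} [DecidableEq ι] {f : ι → ℕ}
    {T V : Finset ι} (hTV : T ⊆ V) (hf : ∀ i ∈ V, f i ∈ NumMon n)
    (h : GDvd n x (∑ i ∈ T, f i)) : GDvd n x (∑ i ∈ V, f i) := by
  have hsd : ∑ i ∈ V \ T, f i + ∑ i ∈ T, f i = ∑ i ∈ V, f i := Finset.sum_sdiff hTV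
  rw [← hsd, add_comm]
  exact gdvd_add h (sum_mem _ _ fun i hi => hf i (Finset.sdiff_subset hi))

end BulletAux

namespace BulletAux

lemma ext_bullet {n : Fin k → ℕ} (x : ℕ) {ι : Type*} [DecidableEq ι] (g : ι → ℕ)
    (V : Finset ι) (hg : ∀ i ∈ V, IrreducibleIn (NumMon n) (g i))
    (hdvd : GDvd n x (∑ i ∈ V, g i)) :
    ∃ U ⊆ V, GDvd n x (∑ i ∈ U, g i) ∧ IsBulletLength n x U.card := by
  classical
  set Ω : Set ℕ := {c | ∃ W ⊆ V, W.card = c ∧ GDvd n x (∑ i ∈ W, g i)} with hΩ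
  have hne : V.card ∈ Ω := ⟨V, Finset.Subset.refl V, rfl, hdvd⟩
  obtain ⟨U, hUV, hUcard, hUdvd⟩ := Nat.sInf_mem (⟨V.card, hne⟩ : Ω.Nonempty)
  have hminimal : ∀ W ⊆ V, GDvd n x (∑ i ∈ W, g i) → U.card ≤ W.card := by
    intro W hWV hW
    rw [hUcard]
    exact Nat.sInf_le ⟨W, hWV, rfl, hW⟩
  refine ⟨U, hUV, hUdvd, ?_⟩
  -- build the bullet function
  have hcardU : Fintype.card ↥U = U.card := Fintype.card_coe U
  set e : ↥U ≃ Fin U.card := Fintype.equivFinOfCardEq hcardU with he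
  set h : Fin U.card → ℕ := fun j => g ((e.symm j) : ι) with hh
  have hsum : ∑ j, h j = ∑ i ∈ U, g i := by
    rw [← Finset.sum_coe_sort U g]
    exact Equiv.sum_comp e.symm (fun a : ↥U => g (a : ι))
  refine ⟨h, ?_, ?_, ?_⟩
  · intro j
    exact hg _ (hUV (e.symm j).2)
  · rw [hsum]; exact hUdvd
  · intro j0 hcontra
    set a0 : ι := ((e.symm j0) : ι) with ha0
    have ha0U : a0 ∈ U := (e.symm j0).2
    have hkey : ∑ j ∈ Finset.univ.erase j0, h j = ∑ i ∈ U.erase a0, g i := by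
      have h1 : h j0 + ∑ j ∈ Finset.univ.erase j0, h j = ∑ j, h j :=
        Finset.add_sum_erase _ h (Finset.mem_univ j0)
      have h2 : g a0 + ∑ i ∈ U.erase a0, g i = ∑ i ∈ U, g i :=
        Finset.add_sum_erase _ g ha0U
      have h3 : h j0 = g a0 := rfl
      omega
    rw [hkey] at hcontra
    have hsub : U.erase a0 ⊆ V := (Finset.erase_subset a0 U).trans hUV
    have hlt := hminimal _ hsub hcontra
    have : (U.erase a0).card = U.card - 1 := Finset.card_erase_of_mem ha0U
    have hpos : 0 < U.card := Finset.card_pos.2 ⟨a0, ha0U⟩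
    omega

end BulletAux

namespace BulletAux

lemma bullet_le {n : Fin k → ℕ} {x : ℕ} (hx : x ∈ NumMon n) (hx0 : x ≠ 0) :
    ∃ B : ℕ, ∀ t, IsBulletLength n x t → t ≤ B := by
  classical
  obtain ⟨N, hN⟩ := frob n
  refine ⟨x + N, ?_⟩
  rintro t ⟨f, hirr, hdvd, hmin'⟩
  by_contra hcon
  push_neg at hcon
  have ht : 0 < t := by omega
  set j : Fin t := ⟨0, ht⟩ with hj
  apply hmin' j
  have hone : ∀ i ∈ Finset.univ.erase j, 1 ≤ f i := fun i _ =>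
    Nat.one_le_iff_ne_zero.2 (hirr i).2.1
  have h2 : (Finset.univ.erase j).card = t - 1 := by
    rw [Finset.card_erase_of_mem (Finset.mem_univ j), Finset.card_univ, Fintype.card_fin]
  have h1 : t - 1 ≤ ∑ i ∈ Finset.univ.erase j, f i := by
    have h0 := Finset.card_nsmul_le_sum (Finset.univ.erase j) f 1 hone
    simpa [h2] using h0
  have hd1 : dgcd n ∣ ∑ i ∈ Finset.univ.erase j, f i :=
    dgcd_dvd (sum_mem _ _ fun i _ => (hirr i).1)
  have hd2 : dgcd n ∣ x := dgcd_dvd hx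
  have hmem : (∑ i ∈ Finset.univ.erase j, f i) - x ∈ NumMon n :=
    hN _ (Nat.dvd_sub hd1 hd2) (by omega)
  exact ⟨(∑ i ∈ Finset.univ.erase j, f i) - x, hmem, by omega⟩

end BulletAux

open BulletAux in
theorem numerical_monoid_omega_via_bullets {k : ℕ}
    (n : Fin k → ℕ) (hpos : ∀ i, 0 < n i) (hmin : MinimalGens n)
    (x : ℕ) (hx : x ∈ NumMon n) (hx0 : x ≠ 0) (m : ℕ) :
    GOmega n x = m ↔ IsGreatest {t : ℕ | IsBulletLength n x t} m := by
  classical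
  set BL : Set ℕ := {t : ℕ | IsBulletLength n x t} with hBL
  -- BL is nonempty
  have hNE : BL.Nonempty := by
    obtain ⟨L, hL1, hL2⟩ := decomp hpos hmin hx
    have hgm : ∀ j : Fin L.length, L.get j ∈ NumMon n := fun j => (hL1 _ (L.get_mem j)).1
    have hsum : ∑ j ∈ Finset.univ, L.get j = x := by
      rw [← hL2]
      exact Fin.sum_univ_getElem L
    obtain ⟨U, _, _, hU⟩ := ext_bullet x (L.get) Finset.univ
      (fun j _ => hL1 _ (L.get_mem j)) (by rw [hsum]; exact gdvd_refl n x)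
    exact ⟨U.card, hU⟩
  have hBdd : BddAbove BL := by
    obtain ⟨B0, hB0⟩ := bullet_le hx hx0
    exact ⟨B0, fun t ht => hB0 t ht⟩
  set B : ℕ := sSup BL with hB
  have hBmem : B ∈ BL := Nat.sSup_mem hNE hBdd
  have hGreat : IsGreatest BL B := ⟨hBmem, fun t ht => le_csSup hBdd ht⟩
  -- B is an omega bound
  have hbound : GOmegaBound n x B := by
    intro t f hf hdvd
    choose L hL1 hL2 using fun i => decomp hpos hmin (hf i)
    set g : ((i : Fin t) × Fin (L i).length) → ℕ := fun p => (L p.1).get p.2 with hg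
    have hgirr : ∀ p : ((i : Fin t) × Fin (L i).length), IrreducibleIn (NumMon n) (g p) :=
      fun p => hL1 p.1 _ ((L p.1).get_mem p.2)
    have hsig : ∀ T : Finset (Fin t),
        ∑ i ∈ T, f i = ∑ p ∈ T.sigma (fun _ => Finset.univ), g p := by
      intro T
      rw [Finset.sum_sigma]
      refine Finset.sum_congr rfl fun i _ => ?_
      rw [← hL2 i]
      exact (Fin.sum_univ_getElem (L i)).symm
    have hdvd' : GDvd n x (∑ p ∈ (Finset.univ : Finset (Fin t)).sigma (fun _ => Finset.univ), g p) := by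
      rw [← hsig Finset.univ]; exact hdvd
    obtain ⟨U, hUV, hUdvd, hUbul⟩ := ext_bullet x g
      ((Finset.univ : Finset (Fin t)).sigma (fun _ => Finset.univ))
      (fun p _ => hgirr p) hdvd'
    refine ⟨U.image Sigma.fst, ?_, ?_⟩
    · calc (U.image Sigma.fst).card ≤ U.card := Finset.card_image_le
      _ ≤ B := le_csSup hBdd hUbul
    · rw [hsig (U.image Sigma.fst)]
      apply gdvd_mono (T := U)
      · intro p hp
        exact Finset.mem_sigma.2 ⟨Finset.mem_image_of_mem Sigma.fst hp, Finset.mem_univ _⟩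
      · intro p _
        exact (hgirr p).1
      · exact hUdvd
  -- every bound dominates every bullet length
  have hge : ∀ m', GOmegaBound n x m' → ∀ t ∈ BL, t ≤ m' := by
    rintro m' hm' t ⟨f, hirr, hdvd, hmin'⟩
    obtain ⟨T, hTcard, hTdvd⟩ := hm' t f (fun i => (hirr i).1) hdvd
    by_cases hT : T = Finset.univ
    · subst hT
      calc t = (Finset.univ : Finset (Fin t)).card := by
            rw [Finset.card_univ, Fintype.card_fin]
      _ ≤ m' := hTcard
    · obtain ⟨j, hj⟩ : ∃ j, j ∉ T := by
        by_contra hall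
        push_neg at hall
        exact hT (Finset.eq_univ_iff_forall.2 hall)
      have hsub : T ⊆ Finset.univ.erase j := fun i hi =>
        Finset.mem_erase.2 ⟨fun hij => hj (hij ▸ hi), Finset.mem_univ i⟩
      exact absurd (gdvd_mono hsub (fun i _ => (hirr i).1) hTdvd) (hmin' j)
  have hOm : GOmega n x = B := by
    refine le_antisymm (Nat.sInf_le hbound) (le_csInf ⟨B, hbound⟩ ?_)
    intro m' hm'
    exact hge m' hm' B hBmem
  constructor
  · rintro rfl
    rw [hOm]
    exact hGreat
  · intro h
    rw [hOm]
    exact hGreat.unique h
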